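/- Every characteristic point of the strong SRRT contact Hamilton-Jacobi equation is a stationary point of its characteristic system: if $F(x,u,p)=0$ and $F_{p_1}(x,u,p)=F_{p_2}(x,u,p)=0$, then also $F_{x_i}(x,u,p)+p_iF_u(x,u,p)=0$ for $i=1,2$. Equivalently, writing $-F=P_1P_2^2-3Ve^{2u}P_1^2+(\Delta_0V)P_2^2$ with $P_1,P_2$ affine in $p$, at a point where $P_1=P_2=0$ one has $F_u=0$, $\partial F/\partial P_k=0$, $\partial F/\partial V=0$ and $\partial F/\partial(\Delta_0V)=0$. -/

import Mathlib

set_option maxHeartbeats 1000000 in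
/-- every characteristic point of the strong SRRT contact Hamilton-Jacobi
equation is a stationary point of its characteristic system: if `F(x,u,p) = 0` and the
momentum gradient `F_p(x,u,p)` vanishes, then `F_{x_i}(x,u,p) + p_i F_u(x,u,p) = 0` for
`i = 1, 2`. Here `F(x,u,p) = -(B - H̃₀)²(A + Δ₀V - H₀) + 3 e^{2u} V (A - H₀)²` with
`A(x,p) = ∂₁V(x) p₁ + ∂₂V(x) p₂`, `B(x,p) = -∂₂V(x) p₁ + ∂₁V(x) p₂`, where `V` is `C²`
with `V > 0`, `H₀, H̃₀, Δ₀V` are differentiable, and `x` is a noncritical point of `V`. -/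
theorem strong_srrt_stmt11
    (V H0 tH0 Δ0V : ℝ × ℝ → ℝ)
    (hV : ContDiff ℝ 2 V) (hH0 : Differentiable ℝ H0)
    (htH0 : Differentiable ℝ tH0) (hΔ : Differentiable ℝ Δ0V)
    (hVpos : ∀ x, 0 < V x)
    (A B : (ℝ × ℝ) → (ℝ × ℝ) → ℝ)
    (hA : ∀ x p, A x p = fderiv ℝ V x (1, 0) * p.1 + fderiv ℝ V x (0, 1) * p.2)
    (hB : ∀ x p, B x p = -(fderiv ℝ V x (0, 1)) * p.1 + fderiv ℝ V x (1, 0) * p.2)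
    (F : (ℝ × ℝ) → ℝ → (ℝ × ℝ) → ℝ)
    (hF : ∀ x u p, F x u p = -(B x p - tH0 x) ^ 2 * (A x p + Δ0V x - H0 x)
            + 3 * Real.exp (2 * u) * V x * (A x p - H0 x) ^ 2)
    (x : ℝ × ℝ) (u : ℝ) (p : ℝ × ℝ)
    (hgrad : fderiv ℝ V x ≠ 0)
    (h0 : F x u p = 0)
    (hp : fderiv ℝ (fun q => F x u q) p = 0) :
    fderiv ℝ (fun y => F y u p) x (1, 0) + p.1 * deriv (fun s => F x s p) u = 0
    ∧ fderiv ℝ (fun y => F y u p) x (0, 1) + p.2 * deriv (fun s => F x s p) u = 0 := by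
  set g1 : ℝ := fderiv ℝ V x (1, 0) with hg1def
  set g2 : ℝ := fderiv ℝ V x (0, 1) with hg2def
  set K : ℝ := 3 * Real.exp (2 * u) * V x with hKdef
  have hKpos : 0 < K := by
    have := hVpos x
    positivity
  set a : ℝ := g1 * p.1 + g2 * p.2 - H0 x with hadef
  set b : ℝ := -g2 * p.1 + g1 * p.2 - tH0 x with hbdef
  -- gradient nonzero
  have hgsq : 0 < g1 ^ 2 + g2 ^ 2 := by
    rcases lt_or_eq_of_le (by positivity : (0:ℝ) ≤ g1 ^ 2 + g2 ^ 2) with h | h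
    · exact h
    · exfalso
      have h1 : g1 = 0 := by nlinarith [sq_nonneg g1, sq_nonneg g2]
      have h2 : g2 = 0 := by nlinarith [sq_nonneg g1, sq_nonneg g2]
      apply hgrad
      apply ContinuousLinearMap.ext
      intro v
      have hv : (v : ℝ × ℝ) = v.1 • ((1:ℝ), (0:ℝ)) + v.2 • ((0:ℝ), (1:ℝ)) := by
        ext <;> simp
      rw [hv, map_add, map_smul, map_smul]
      simp [← hg1def, ← hg2def, h1, h2]
  -- derivative in p
  have hLb : HasFDerivAt (fun q : ℝ × ℝ => -g2 * q.1 + g1 * q.2 - tH0 x)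
      ((-g2) • (ContinuousLinearMap.fst ℝ ℝ ℝ) + g1 • (ContinuousLinearMap.snd ℝ ℝ ℝ)) p :=
    ((hasFDerivAt_fst.const_mul (-g2)).add (hasFDerivAt_snd.const_mul g1)).sub_const _
  have hLa : HasFDerivAt (fun q : ℝ × ℝ => g1 * q.1 + g2 * q.2 - H0 x)
      (g1 • (ContinuousLinearMap.fst ℝ ℝ ℝ) + g2 • (ContinuousLinearMap.snd ℝ ℝ ℝ)) p :=
    ((hasFDerivAt_fst.const_mul g1).add (hasFDerivAt_snd.const_mul g2)).sub_const _
  have hLs : HasFDerivAt (fun q : ℝ × ℝ => g1 * q.1 + g2 * q.2 + (Δ0V x - H0 x))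
      (g1 • (ContinuousLinearMap.fst ℝ ℝ ℝ) + g2 • (ContinuousLinearMap.snd ℝ ℝ ℝ)) p :=
    ((hasFDerivAt_fst.const_mul g1).add (hasFDerivAt_snd.const_mul g2)).add_const _
  have efun : (fun q => F x u q) = (fun q : ℝ × ℝ =>
      -(((-g2 * q.1 + g1 * q.2 - tH0 x) * (-g2 * q.1 + g1 * q.2 - tH0 x))
        * (g1 * q.1 + g2 * q.2 + (Δ0V x - H0 x)))
      + K * ((g1 * q.1 + g2 * q.2 - H0 x) * (g1 * q.1 + g2 * q.2 - H0 x))) := by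
    funext q
    rw [hF, hA, hB, ← hg1def, ← hg2def]
    ring
  have hFq' := ((((hLb.mul hLb).mul hLs).neg).add ((hLa.mul hLa).const_mul K))
  rw [efun] at hp
  replace hp := hFq'.fderiv.symm.trans hp
  have hfd := hp
  have E1 : (-(b * b) + 2 * K * a) * g1 + (2 * b * (a + Δ0V x)) * g2 = 0 := by
    have := congrArg (fun L : (ℝ × ℝ) →L[ℝ] ℝ => L ((1:ℝ), (0:ℝ))) hfd
    simp only [ContinuousLinearMap.zero_apply, ContinuousLinearMap.add_apply,
      ContinuousLinearMap.neg_apply, ContinuousLinearMap.smul_apply,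
      ContinuousLinearMap.coe_fst', ContinuousLinearMap.coe_snd', smul_eq_mul, Pi.mul_apply] at this
    rw [hadef, hbdef]
    linear_combination this
  have E2 : (-(b * b) + 2 * K * a) * g2 - (2 * b * (a + Δ0V x)) * g1 = 0 := by
    have := congrArg (fun L : (ℝ × ℝ) →L[ℝ] ℝ => L ((0:ℝ), (1:ℝ))) hfd
    simp only [ContinuousLinearMap.zero_apply, ContinuousLinearMap.add_apply,
      ContinuousLinearMap.neg_apply, ContinuousLinearMap.smul_apply,
      ContinuousLinearMap.coe_fst', ContinuousLinearMap.coe_snd', smul_eq_mul, Pi.mul_apply] at this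
    rw [hadef, hbdef]
    linear_combination this
  -- F = 0 rewritten
  have h0' : -(b * b) * (a + Δ0V x) + K * (a * a) = 0 := by
    rw [hF, hA, hB, ← hg1def, ← hg2def] at h0
    rw [hadef, hbdef]
    linear_combination h0
  have hM : -(b * b) + 2 * K * a = 0 := by
    have h := congrArg₂ (fun r s : ℝ => g1 * r + g2 * s) E1 E2
    beta_reduce at h
    have : (-(b * b) + 2 * K * a) * (g1 ^ 2 + g2 ^ 2) = 0 := by linear_combination h
    rcases mul_eq_zero.mp this with h' | h'
    · exact h'
    · exact absurd h' (ne_of_gt hgsq)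
  have hN : b * (a + Δ0V x) = 0 := by
    have h := congrArg₂ (fun r s : ℝ => g2 * r - g1 * s) E1 E2
    beta_reduce at h
    have : (2 * (b * (a + Δ0V x))) * (g1 ^ 2 + g2 ^ 2) = 0 := by linear_combination h
    rcases mul_eq_zero.mp this with h' | h'
    · linarith
    · exact absurd h' (ne_of_gt hgsq)
  have ha0 : a = 0 := by
    have hKa : K * (a * a) = 0 := by
      linear_combination h0' + b * hN
    have : a * a = 0 := by
      rcases mul_eq_zero.mp hKa with h' | h'
      · exact absurd h' (ne_of_gt hKpos)
      · exact h'
    exact pow_eq_zero_iff (n := 2) (by norm_num) |>.mp (by linear_combination this)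
  have hb0 : b = 0 := by
    have : b * b = 0 := by linear_combination -hM + 2 * K * ha0
    exact pow_eq_zero_iff (n := 2) (by norm_num) |>.mp (by linear_combination this)
  -- values at the point
  have hax : fderiv ℝ V x ((1:ℝ),(0:ℝ)) * p.1 + fderiv ℝ V x ((0:ℝ),(1:ℝ)) * p.2 - H0 x = 0 := by
    rw [← hg1def, ← hg2def]; exact ha0
  have hbx : -(fderiv ℝ V x ((0:ℝ),(1:ℝ))) * p.1 + fderiv ℝ V x ((1:ℝ),(0:ℝ)) * p.2 - tH0 x = 0 := by
    rw [← hg1def, ← hg2def]; exact hb0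
  -- u-derivative vanishes
  have hderivu : deriv (fun s => F x s p) u = 0 := by
    have : (fun s => F x s p) = fun _ : ℝ => -(B x p - tH0 x) ^ 2 * (A x p + Δ0V x - H0 x) := by
      funext s
      rw [hF]
      have : A x p - H0 x = 0 := by rw [hA]; exact hax
      rw [this]
      ring
    rw [this, deriv_const]
  -- x-derivative vanishes
  have hVC1 : ContDiff ℝ 1 (fderiv ℝ V) := hV.fderiv_right (by norm_num)
  have hg1d : Differentiable ℝ (fun y => fderiv ℝ V y ((1:ℝ),(0:ℝ))) :=
    (ContinuousLinearMap.apply ℝ ℝ ((1:ℝ),(0:ℝ))).differentiable.comp (hVC1.differentiable one_ne_zero)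
  have hg2d : Differentiable ℝ (fun y => fderiv ℝ V y ((0:ℝ),(1:ℝ))) :=
    (ContinuousLinearMap.apply ℝ ℝ ((0:ℝ),(1:ℝ))).differentiable.comp (hVC1.differentiable one_ne_zero)
  have hβd : DifferentiableAt ℝ (fun y => -(fderiv ℝ V y ((0:ℝ),(1:ℝ))) * p.1 + fderiv ℝ V y ((1:ℝ),(0:ℝ)) * p.2 - tH0 y) x :=
    (((hg2d.neg.mul_const p.1).add (hg1d.mul_const p.2)).sub htH0).differentiableAt
  have hαd : DifferentiableAt ℝ (fun y => fderiv ℝ V y ((1:ℝ),(0:ℝ)) * p.1 + fderiv ℝ V y ((0:ℝ),(1:ℝ)) * p.2 - H0 y) x :=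
    (((hg1d.mul_const p.1).add (hg2d.mul_const p.2)).sub hH0).differentiableAt
  have hσd : DifferentiableAt ℝ (fun y => fderiv ℝ V y ((1:ℝ),(0:ℝ)) * p.1 + fderiv ℝ V y ((0:ℝ),(1:ℝ)) * p.2 + Δ0V y - H0 y) x :=
    ((((hg1d.mul_const p.1).add (hg2d.mul_const p.2)).add hΔ).sub hH0).differentiableAt
  have hVd : DifferentiableAt ℝ V x := (hV.differentiable (by norm_num)).differentiableAt
  have efun2 : (fun y => F y u p) = (fun y : ℝ × ℝ =>
      -(((-(fderiv ℝ V y ((0:ℝ),(1:ℝ))) * p.1 + fderiv ℝ V y ((1:ℝ),(0:ℝ)) * p.2 - tH0 y) *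
          (-(fderiv ℝ V y ((0:ℝ),(1:ℝ))) * p.1 + fderiv ℝ V y ((1:ℝ),(0:ℝ)) * p.2 - tH0 y)) *
          (fderiv ℝ V y ((1:ℝ),(0:ℝ)) * p.1 + fderiv ℝ V y ((0:ℝ),(1:ℝ)) * p.2 + Δ0V y - H0 y))
      + (3 * Real.exp (2 * u)) * (V y *
          ((fderiv ℝ V y ((1:ℝ),(0:ℝ)) * p.1 + fderiv ℝ V y ((0:ℝ),(1:ℝ)) * p.2 - H0 y) *
           (fderiv ℝ V y ((1:ℝ),(0:ℝ)) * p.1 + fderiv ℝ V y ((0:ℝ),(1:ℝ)) * p.2 - H0 y)))) := by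
    funext y
    rw [hF, hA, hB]
    ring
  have hβ := hβd.hasFDerivAt
  have hα := hαd.hasFDerivAt
  have hσ := hσd.hasFDerivAt
  have hVfd := hVd.hasFDerivAt
  have hbig := ((((hβ.mul hβ).mul hσ).neg).add ((hVfd.mul (hα.mul hα)).const_mul (3 * Real.exp (2 * u))))
  have hfdx : fderiv ℝ (fun y => F y u p) x = 0 := by
    rw [efun2]; refine hbig.fderiv.trans ?_
    apply ContinuousLinearMap.ext
    intro v
    simp only [ContinuousLinearMap.add_apply, ContinuousLinearMap.neg_apply,
      ContinuousLinearMap.smul_apply, ContinuousLinearMap.zero_apply, smul_eq_mul, Pi.mul_apply]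
    rw [hbx, hax]
    ring
  rw [hfdx, hderivu]
  norm_num
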